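/- Let k be a field and R a commutative k-algebra. Then for every integer n with 1 ≤ n ≤ |k| (cardinality of k), every hollow n×n matrix over R is a commutator. In particular, if k is infinite, every hollow matrix of any size over R is a commutator. -/

import Mathlib

/-- Let `k` be a field and `R` a commutative `k`-algebra. Then for every integer `n`
with `1 ≤ n ≤ |k|`, every hollow `n × n` matrix over `R` is a commutator. -/
theorem stmt7 (k : Type*) [Field k] (R : Type*) [CommRing R] [Algebra k R]
    (n : ℕ) (hn : 1 ≤ n) (hcard : (n : Cardinal) ≤ Cardinal.mk k)
    (A : Matrix (Fin n) (Fin n) R) (hA : ∀ i, A i i = 0) :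
    ∃ X Y : Matrix (Fin n) (Fin n) R, A = X * Y - Y * X := by
  have : Cardinal.lift.{_,0} (Cardinal.mk (Fin n)) ≤ Cardinal.lift.{0} (Cardinal.mk k) := by
    simpa using hcard
  obtain ⟨c⟩ := Cardinal.lift_mk_le'.mp this
  set X : Matrix (Fin n) (Fin n) R :=
    Matrix.diagonal (fun i => algebraMap k R (c i)) with hX
  set Y : Matrix (Fin n) (Fin n) R :=
    fun i j => if i = j then 0 else algebraMap k R (c i - c j)⁻¹ * A i j with hY
  refine ⟨X, Y, ?_⟩
  ext i j
  simp only [Matrix.sub_apply, hX]; simp only [Matrix.diagonal_mul, Matrix.mul_diagonal]; simp only [hY]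
  by_cases h : i = j
  · subst h; simp [hA]
  · have hc : c i - c j ≠ 0 := sub_ne_zero.mpr (fun e => h (c.injective e))
    simp only [if_neg h]
    rw [mul_comm (algebraMap k R (c i - c j)⁻¹ * A i j)]
    rw [← mul_assoc, ← mul_assoc, ← map_mul, ← map_mul, ← sub_mul, ← map_sub, ← sub_mul,
      mul_inv_cancel₀ hc]
    simp
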